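/- Let C be a locally finitely presented Grothendieck category and let S be a class of compact objects of C that generates C. Then an object X of C is compact if and only if there exists an exact sequence ⊕_{i=0}^n S_i → ⊕_{j=0}^m S'_j → X → 0 with all S_i, S'_j belonging to S (i.e. X is the cokernel of a morphism between finite direct sums of objects of S). -/

import Mathlib

open CategoryTheory Limits Opposite

universe u

namespace Env

section Basics

variable {C : Type*} [Category C]

/-- `g` is a weak kernel of `f`. -/
def IsWeakKernel [Limits.HasZeroMorphisms C] {A B K : C} (f : B ⟶ A) (g : K ⟶ B) : Prop :=
  g ≫ f = 0 ∧ ∀ ⦃K' : C⦄ (g' : K' ⟶ B), g' ≫ f = 0 → ∃ t : K' ⟶ K, t ≫ g = g'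

/-- `h` is a weak cokernel of `f`. -/
def IsWeakCokernel [Limits.HasZeroMorphisms C] {A B Q : C} (f : A ⟶ B) (h : B ⟶ Q) : Prop :=
  f ≫ h = 0 ∧ ∀ ⦃Q' : C⦄ (h' : B ⟶ Q'), f ≫ h' = 0 → ∃ t : Q ⟶ Q', h ≫ t = h'

/-- A kernel–cokernel pair: `f ≫ g = 0`, `f` is a kernel of `g` and `g` is a cokernel of `f`. -/
structure IsKernelCokernelPair [Limits.HasZeroMorphisms C] {A B X : C}
    (f : A ⟶ B) (g : B ⟶ X) : Prop where
  zero : f ≫ g = 0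
  isKernel : Nonempty (IsLimit (KernelFork.ofι f zero))
  isCokernel : Nonempty (IsColimit (CokernelCofork.ofπ g zero))

end Basics

lemma map_comp_zero {C : Type*} [Category C] [Preadditive C]
    {D : Type*} [Category D] [Preadditive D]
    (F : C ⥤ D) (hF : F.Additive) {X Y Z : C} {f : X ⟶ Y} {g : Y ⟶ Z}
    (wzero : f ≫ g = 0) : F.map f ≫ F.map g = 0 := by
  haveI := hF
  rw [← F.map_comp, wzero, Functor.map_zero]

/-- A Quillen exact structure on an additive category: a distinguished class of conflations
(kernel–cokernel pairs) satisfying Quillen's axioms. -/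
structure ExactStructure (E : Type*) [Category E] [Preadditive E] where
  /-- `conf f g` means that `(f, g)` is a conflation. -/
  conf : ∀ ⦃A B C : E⦄, (A ⟶ B) → (B ⟶ C) → Prop
  conf_pair : ∀ ⦃A B C : E⦄ (f : A ⟶ B) (g : B ⟶ C), conf f g → IsKernelCokernelPair f g
  defl_id : ∀ X : E, ∃ (A : E) (f : A ⟶ X), conf f (𝟙 X)
  defl_comp : ∀ ⦃A B C : E⦄ (g : A ⟶ B) (g' : B ⟶ C),
    (∃ (K : E) (f : K ⟶ A), conf f g) → (∃ (K : E) (f : K ⟶ B), conf f g') →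
    ∃ (K : E) (f : K ⟶ A), conf f (g ≫ g')
  defl_pullback : ∀ ⦃B C C' : E⦄ (g : B ⟶ C) (h : C' ⟶ C),
    (∃ (K : E) (f : K ⟶ B), conf f g) →
    ∃ (B' : E) (p : B' ⟶ B) (q : B' ⟶ C') (w : p ≫ g = q ≫ h),
      (∃ (K : E) (f : K ⟶ B'), conf f q) ∧ Nonempty (IsLimit (PullbackCone.mk p q w))
  infl_pushout : ∀ ⦃A B A' : E⦄ (f : A ⟶ B) (h : A ⟶ A'),
    (∃ (C : E) (g : B ⟶ C), conf f g) →
    ∃ (B' : E) (p : B ⟶ B') (q : A' ⟶ B') (w : f ≫ p = h ≫ q),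
      (∃ (C : E) (g : B' ⟶ C), conf q g) ∧ Nonempty (IsColimit (PushoutCocone.mk p q w))

section Exact

variable {E : Type*} [Category E] [Preadditive E]

/-- `g` is a deflation for the exact structure `S`. -/
def ExactStructure.IsDeflation (S : ExactStructure E) {B C : E} (g : B ⟶ C) : Prop :=
  ∃ (K : E) (f : K ⟶ B), S.conf f g

/-- `f` is an inflation for the exact structure `S`. -/
def ExactStructure.IsInflation (S : ExactStructure E) {A B : E} (f : A ⟶ B) : Prop :=
  ∃ (C : E) (g : B ⟶ C), S.conf f g

/-- A functor from an exact category to an additive category is right exact if it is additive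
and for every conflation `(f, g)`, `F g` is a cokernel of `F f`. -/
structure IsRightExact (S : ExactStructure E) {B : Type*} [Category B] [Preadditive B]
    (F : E ⥤ B) : Prop where
  additive : F.Additive
  preserves : ∀ ⦃A X C : E⦄ (f : A ⟶ X) (g : X ⟶ C) (h : S.conf f g),
    Nonempty (IsColimit (CokernelCofork.ofπ (F.map g)
      (map_comp_zero F additive (S.conf_pair f g h).zero)))

/-- A functor from an exact category to an additive category is left exact if it is additive
and for every conflation `(f, g)`, `F f` is a kernel of `F g`. -/
structure IsLeftExact (S : ExactStructure E) {B : Type*} [Category B] [Preadditive B]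
    (F : E ⥤ B) : Prop where
  additive : F.Additive
  preserves : ∀ ⦃A X C : E⦄ (f : A ⟶ X) (g : X ⟶ C) (h : S.conf f g),
    Nonempty (IsLimit (KernelFork.ofι (F.map f)
      (map_comp_zero F additive (S.conf_pair f g h).zero)))

/-- `g : C ⟶ B` is an Ext-kernel of `f : B ⟶ A` (w.r.t. the exact structure `S`):
`g ≫ f = 0` and for every `g' : C' ⟶ B` with `g' ≫ f = 0` there is a deflation
`d : D ⟶ C'` such that `d ≫ g'` factors through `g`. -/
def IsExtKernel (S : ExactStructure E) {A B C : E} (f : B ⟶ A) (g : C ⟶ B) : Prop :=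
  g ≫ f = 0 ∧ ∀ ⦃C' : E⦄ (g' : C' ⟶ B), g' ≫ f = 0 →
    ∃ (D : E) (d : D ⟶ C'), S.IsDeflation d ∧ ∃ t : D ⟶ C, t ≫ g = d ≫ g'

/-- An exact category is left Ext-coherent if every morphism admits an Ext-kernel. -/
def LeftExtCoherent (S : ExactStructure E) : Prop :=
  ∀ ⦃B A : E⦄ (f : B ⟶ A), ∃ (C : E) (g : C ⟶ B), IsExtKernel S f g

end Exact

/-- An additive category is left coherent if every morphism admits a weak kernel. -/
def LeftCoherent (E : Type*) [Category E] [Preadditive E] : Prop :=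
  ∀ ⦃B A : E⦄ (f : B ⟶ A), ∃ (K : E) (g : K ⟶ B), IsWeakKernel f g

section MoreDefs

variable (C : Type*) [Category C] [Preadditive C]

/-- An additive functor between additive categories preserving cokernels: every morphism
which is a cokernel (of some morphism) is sent to a cokernel of its image. -/
structure PreservesCokernelsP {C : Type*} [Category C] [Preadditive C]
    {D : Type*} [Category D] [Preadditive D] (F : C ⥤ D) : Prop where
  additive : F.Additive
  preserves : ∀ ⦃X Y Z : C⦄ (f : X ⟶ Y) (c : Y ⟶ Z) (w : f ≫ c = 0),
    Nonempty (IsColimit (CokernelCofork.ofπ c w)) →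
    Nonempty (IsColimit (CokernelCofork.ofπ (F.map c) (map_comp_zero F additive w)))

/-- An additive category is left abelian if it has cokernels and for every morphism
`f : A ⟶ B` with cokernel `c : B ⟶ X` and every `g : D ⟶ B` with `g ≫ c = 0` there is
a morphism `d : E ⟶ D` which is a cokernel (of some morphism), such that `d ≫ g` factors
through `f`. -/
structure IsLeftAbelian : Prop where
  hasCokernels : HasCokernels C
  factor : ∀ ⦃A B X : C⦄ (f : A ⟶ B) (c : B ⟶ X) (w : f ≫ c = 0),
    Nonempty (IsColimit (CokernelCofork.ofπ c w)) →
    ∀ ⦃D : C⦄ (g : D ⟶ B), g ≫ c = 0 →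
      ∃ (W E : C) (u : W ⟶ E) (d : E ⟶ D) (w' : u ≫ d = 0),
        Nonempty (IsColimit (CokernelCofork.ofπ d w')) ∧ ∃ t : E ⟶ A, t ≫ f = d ≫ g

/-- A preadditive category (with its given preadditive structure) is abelian:
it has finite biproducts, kernels and cokernels, and every monomorphism and every
epimorphism is normal. -/
def IsAbelianP : Prop :=
  HasFiniteBiproducts C ∧ HasKernels C ∧ HasCokernels C ∧
    (∀ ⦃X Y : C⦄ (f : X ⟶ Y), Mono f → Nonempty (NormalMono f)) ∧
    (∀ ⦃X Y : C⦄ (f : X ⟶ Y), Epi f → Nonempty (NormalEpi f))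

end MoreDefs

/-- An object `X` is compact (finitely presented) if `Hom(X, -)` preserves filtered colimits
(indexed by small filtered categories in `Type u`). -/
def IsCompact {C : Type*} [Category C] (X : C) : Prop :=
  ∀ (J : Type u) (_ : SmallCategory J), IsFiltered J →
    Nonempty (PreservesColimitsOfShape J (coyoneda.obj (op X)))

section RexAbelian

variable {A : Type*} [Category A] [Abelian A] {B : Type*} [Category B] [Preadditive B]

/-- A functor from an abelian category (whose conflations are all kernel–cokernel pairs,
i.e. all short exact sequences) is right exact if it is additive and sends every short exact
sequence `(f, g)` to a diagram where `F g` is a cokernel of `F f`. -/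
structure IsRightExactAb (F : A ⥤ B) : Prop where
  additive : F.Additive
  preserves : ∀ ⦃X Y Z : A⦄ (f : X ⟶ Y) (g : Y ⟶ Z) (h : IsKernelCokernelPair f g),
    Nonempty (IsColimit (CokernelCofork.ofπ (F.map g) (map_comp_zero F additive h.zero)))

/-- A functor from an abelian category (whose conflations are all kernel–cokernel pairs,
i.e. all short exact sequences) is left exact if it is additive and sends every short exact
sequence `(f, g)` to a diagram where `F f` is a kernel of `F g`. -/
structure IsLeftExactAb (F : A ⥤ B) : Prop where
  additive : F.Additive
  preserves : ∀ ⦃X Y Z : A⦄ (f : X ⟶ Y) (g : Y ⟶ Z) (h : IsKernelCokernelPair f g),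
    Nonempty (IsLimit (KernelFork.ofι (F.map f) (map_comp_zero F additive h.zero)))

end RexAbelian

section Envelope

/-- `(A, i)` is a right abelian envelope of the exact category `(E, S)`: `i` is right exact
and for every abelian category `B`, precomposition with `i` induces an equivalence from the
category of right exact functors `A ⥤ B` to the category of right exact functors `E ⥤ B`.

The equivalence given by precomposition is expressed by: precomposition with `i` sends right
exact functors to right exact functors, it is fully faithful (whiskering is a bijection on
natural transformations) and essentially surjective (every right exact `E ⥤ B` is isomorphic
to some `i ⋙ G` with `G` right exact). -/
structure IsRightAbelianEnvelope.{u₀, w₀, v₁, w₁, v₂, w₂} {E : Type u₀} [Category.{w₀} E]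
    [Preadditive E] (S : ExactStructure E)
    {A : Type v₁} [Category.{w₁} A] [Abelian A] (i : E ⥤ A) : Prop where
  rightExact : IsRightExact S i
  comp_rightExact : ∀ (B : Type v₂) [Category.{w₂} B] [Abelian B] (G : A ⥤ B),
    IsRightExactAb G → IsRightExact S (i ⋙ G)
  whisker_bijective : ∀ (B : Type v₂) [Category.{w₂} B] [Abelian B] (G G' : A ⥤ B),
    IsRightExactAb G → IsRightExactAb G' →
      Function.Bijective (fun σ : G ⟶ G' => Functor.whiskerLeft i σ)
  essSurj : ∀ (B : Type v₂) [Category.{w₂} B] [Abelian B] (F : E ⥤ B),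
    IsRightExact S F → ∃ G : A ⥤ B, IsRightExactAb G ∧ Nonempty (i ⋙ G ≅ F)

/-- `(A, i)` is a left abelian envelope of the exact category `(E, S)`: the dual notion of
`IsRightAbelianEnvelope`, with left exact functors in place of right exact ones. -/
structure IsLeftAbelianEnvelope.{u₀, w₀, v₁, w₁, v₂, w₂} {E : Type u₀} [Category.{w₀} E]
    [Preadditive E] (S : ExactStructure E)
    {A : Type v₁} [Category.{w₁} A] [Abelian A] (i : E ⥤ A) : Prop where
  leftExact : IsLeftExact S i
  comp_leftExact : ∀ (B : Type v₂) [Category.{w₂} B] [Abelian B] (G : A ⥤ B),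
    IsLeftExactAb G → IsLeftExact S (i ⋙ G)
  whisker_bijective : ∀ (B : Type v₂) [Category.{w₂} B] [Abelian B] (G G' : A ⥤ B),
    IsLeftExactAb G → IsLeftExactAb G' →
      Function.Bijective (fun σ : G ⟶ G' => Functor.whiskerLeft i σ)
  essSurj : ∀ (B : Type v₂) [Category.{w₂} B] [Abelian B] (F : E ⥤ B),
    IsLeftExact S F → ∃ G : A ⥤ B, IsLeftExactAb G ∧ Nonempty (i ⋙ G ≅ F)

/-- A witness for the existence of a right abelian envelope of `(E, S)`: an abelian
category (with object type in `Type (u + 1)` and hom types in `Type u`) together with a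
right exact functor from `E` satisfying the universal property of the right abelian
envelope (where the test abelian categories are taken of the same size). -/
structure RightAbelianEnvelopeWitness {E : Type u} [SmallCategory E] [Preadditive E]
    (S : ExactStructure E) where
  A : Type (u + 1)
  [cat : Category.{u} A]
  [ab : Abelian A]
  i : E ⥤ A
  env : IsRightAbelianEnvelope.{u, u, u + 1, u, u + 1, u} S i

/-- Existence of a right abelian envelope of `(E, S)`. -/
def HasRightAbelianEnvelope {E : Type u} [SmallCategory E] [Preadditive E]
    (S : ExactStructure E) : Prop :=
  Nonempty (RightAbelianEnvelopeWitness S)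

end Envelope

section Lex

variable {E : Type u} [SmallCategory E] [Preadditive E]

/-- A functor `Eᵒᵖ ⥤ Ab` is left exact w.r.t. the exact structure `S` if it is additive and
sends every conflation `(f : A ⟶ B, g : B ⟶ C)` to an exact sequence
`0 ⟶ F C ⟶ F B ⟶ F A`: `F g.op` is injective and its image is the kernel of `F f.op`. -/
structure IsLexFunctor (S : ExactStructure E) (F : Eᵒᵖ ⥤ AddCommGrpCat.{u}) : Prop where
  additive : F.Additive
  inj : ∀ ⦃A B C : E⦄ (f : A ⟶ B) (g : B ⟶ C), S.conf f g →
    Function.Injective (F.map g.op)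
  ex : ∀ ⦃A B C : E⦄ (f : A ⟶ B) (g : B ⟶ C), S.conf f g →
    ∀ x : F.obj (op B), F.map f.op x = 0 ↔ ∃ y : F.obj (op C), F.map g.op y = x

/-- The category `Lex(E)` of left exact functors `Eᵒᵖ ⥤ Ab`. -/
abbrev LexCat (S : ExactStructure E) := ObjectProperty.FullSubcategory (IsLexFunctor S)

/-- The full subcategory of compact objects of `Lex(E)`. -/
abbrev LexCompact (S : ExactStructure E) :=
  ObjectProperty.FullSubcategory (fun F : LexCat S => IsCompact.{u} F)

lemma yoneda_isLex (S : ExactStructure E) (X : E) :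
    IsLexFunctor S (preadditiveYoneda.obj X) where
  additive := inferInstance
  inj := by
    intro A B C f g hc
    obtain ⟨w, hker, hcoker⟩ := S.conf_pair f g hc
    intro x y hxy
    exact Cofork.IsColimit.hom_ext hcoker.some hxy
  ex := by
    intro A B C f g hc
    obtain ⟨w, hker, hcoker⟩ := S.conf_pair f g hc
    intro x
    constructor
    · intro hx
      obtain ⟨y, hy⟩ := CokernelCofork.IsColimit.desc' hcoker.some x hx
      exact ⟨y, hy⟩
    · rintro ⟨y, rfl⟩
      show f ≫ g ≫ y = 0
      exact (fun z : C ⟶ X => show f ≫ g ≫ z = 0 by rw [← Category.assoc, w, zero_comp]) y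

/-- The Yoneda embedding of `E` into `Lex(E)`, sending `X` to `Hom_E(-, X)`. -/
def yonedaLex (S : ExactStructure E) : E ⥤ LexCat S :=
  ObjectProperty.lift _ preadditiveYoneda (yoneda_isLex S)

/-- The Yoneda embedding of `E` into the subcategory of compact objects of `Lex(E)`, given
a proof that all representable functors are compact. -/
def yonedaLexC (S : ExactStructure E) (hc : ∀ X : E, IsCompact.{u} ((yonedaLex S).obj X)) :
    E ⥤ LexCompact S :=
  ObjectProperty.lift _ (yonedaLex S) hc

end Lex

section LFP

variable {C : Type*} [Category C]

/-- `X` is a filtered colimit of compact objects. -/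
def IsFilteredColimitOfCompacts (X : C) : Prop :=
  ∃ (J : Type u) (_ : SmallCategory J) (_ : IsFiltered J) (F : J ⥤ C)
    (_ : ∀ j : J, IsCompact.{u} (F.obj j)),
    Nonempty ((t : Cocone F) ×' (IsColimit t) ×' (t.pt ≅ X))

/-- A category is locally finitely presented if it has (small) filtered colimits, its
compact objects form a skeletally small full subcategory, and every object is a filtered
colimit of compact objects. -/
def IsLocallyFinitelyPresented (C : Type*) [Category C] : Prop :=
  HasFilteredColimitsOfSize.{u, u} C ∧
    EssentiallySmall.{u} (ObjectProperty.FullSubcategory (fun X : C => IsCompact.{u} X)) ∧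
    ∀ X : C, IsFilteredColimitOfCompacts.{u} X

/-- AB5: small filtered colimits are exact, i.e. for every small filtered category `J`
(such that `C` has colimits of shape `J`), the colimit functor `(J ⥤ C) ⥤ C` preserves
finite limits. -/
def AB5P (C : Type*) [Category C] : Prop :=
  ∀ (J : Type u) (_ : SmallCategory J), IsFiltered J →
    ∀ (h : HasColimitsOfShape J C),
      Nonempty (PreservesFiniteLimits (@colim J _ C _ h))

/-- A Grothendieck category: an abelian category (`IsAbelianP` w.r.t. the given preadditive
structure) with a generator and small colimits, in which small filtered colimits are
exact (AB5). -/
def IsGrothendieckP (C : Type*) [Category C] [Preadditive C] : Prop :=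
  IsAbelianP C ∧ HasColimitsOfSize.{u, u} C ∧ (∃ G : C, IsSeparator G) ∧ AB5P.{u} C

end LFP

universe v

attribute [local instance] CategoryTheory.Abelian.hasFiniteBiproducts


section BreitsprecherAux

section CompactAux
set_option linter.unusedVariables false

variable {C : Type v} [Category.{u} C]

lemma compact_fac {X : C} (hX : IsCompact.{u} X) {J : Type u} [SmallCategory J]
    [IsFiltered J] {F : J ⥤ C} {c : Cocone F} (hc : IsColimit c) (f : X ⟶ c.pt) :
    ∃ (j : J) (g : X ⟶ F.obj j), g ≫ c.ι.app j = f := by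
  haveI := (hX J _ ‹_›).some
  have hc' := isColimitOfPreserves (coyoneda.obj (op X)) hc
  obtain ⟨j, y, hy⟩ := Types.jointly_surjective _ hc' f
  exact ⟨j, y, hy⟩

lemma compact_eq {X : C} (hX : IsCompact.{u} X) {J : Type u} [SmallCategory J]
    [IsFiltered J] {F : J ⥤ C} {c : Cocone F} (hc : IsColimit c) {j j' : J}
    (g : X ⟶ F.obj j) (g' : X ⟶ F.obj j')
    (h : g ≫ c.ι.app j = g' ≫ c.ι.app j') :
    ∃ (k : J) (u : j ⟶ k) (u' : j' ⟶ k), g ≫ F.map u = g' ≫ F.map u' := by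
  haveI := (hX J _ ‹_›).some
  have hc' := isColimitOfPreserves (coyoneda.obj (op X)) hc
  exact (Types.FilteredColimit.isColimit_eq_iff _ hc' (xi := g) (xj := g')).mp h

lemma isCompact_of (hcolim : HasColimitsOfSize.{u, u} C) (X : C)
    (hs : ∀ (J : Type u) (_ : SmallCategory J), IsFiltered J →
      ∀ (F : J ⥤ C) (c : Cocone F), IsColimit c →
        ∀ f : X ⟶ c.pt, ∃ (j : J) (g : X ⟶ F.obj j), g ≫ c.ι.app j = f)
    (hi : ∀ (J : Type u) (_ : SmallCategory J), IsFiltered J →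
      ∀ (F : J ⥤ C) (c : Cocone F), IsColimit c →
        ∀ (j j' : J) (g : X ⟶ F.obj j) (g' : X ⟶ F.obj j'),
          g ≫ c.ι.app j = g' ≫ c.ι.app j' →
            ∃ (k : J) (u : j ⟶ k) (u' : j' ⟶ k), g ≫ F.map u = g' ≫ F.map u') :
    IsCompact.{u} X := by
  intro J sc hJ
  haveI := hcolim
  refine ⟨⟨fun {F} => ?_⟩⟩
  refine preservesColimit_of_preserves_colimit_cocone (colimit.isColimit F) ?_
  refine Types.FilteredColimit.isColimitOf _ _ ?_ ?_
  · intro x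
    obtain ⟨j, g, hg⟩ := hs J sc hJ F (colimit.cocone F) (colimit.isColimit F) x
    exact ⟨j, g, hg.symm⟩
  · intro i j xi xj hx
    exact hi J sc hJ F (colimit.cocone F) (colimit.isColimit F) i j xi xj hx

lemma isCompact_of_iso {X Y : C} (e : X ≅ Y) (hX : IsCompact.{u} X) : IsCompact.{u} Y := by
  intro J sc hJ
  haveI := (hX J sc hJ).some
  exact ⟨preservesColimitsOfShape_of_natIso (coyoneda.mapIso e.op.symm)⟩


end CompactAux

section FilteredAux

variable {J : Type u} [SmallCategory J] [IsFiltered J]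

lemma exists_sup {n : ℕ} (j : Fin n → J) : ∃ (k : J) (_ : ∀ i, j i ⟶ k), True := by
  induction n with
  | zero => exact ⟨IsFiltered.nonempty.some, fun i => i.elim0, trivial⟩
  | succ n ih =>
    obtain ⟨k₀, u₀, -⟩ := ih (fun i => j i.succ)
    refine ⟨IsFiltered.max (j 0) k₀, fun i => ?_, trivial⟩
    refine Fin.cases (IsFiltered.leftToMax _ _) (fun i' => u₀ i' ≫ IsFiltered.rightToMax _ _) i

lemma equalize_family {j j' : J} (n : ℕ)
    (P : Fin n → ∀ k : J, (j ⟶ k) → (j' ⟶ k) → Prop)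
    (hP : ∀ (i : Fin n) {k k' : J} (v : k ⟶ k') (u : j ⟶ k) (u' : j' ⟶ k),
      P i k u u' → P i k' (u ≫ v) (u' ≫ v))
    (hex : ∀ i, ∃ k u u', P i k u u') :
    ∃ (k : J) (u : j ⟶ k) (u' : j' ⟶ k), ∀ i, P i k u u' := by
  induction n with
  | zero =>
    exact ⟨IsFiltered.max j j', IsFiltered.leftToMax _ _, IsFiltered.rightToMax _ _,
      fun i => i.elim0⟩
  | succ n ih =>
    obtain ⟨k₁, u₁, u₁', h₁⟩ := ih (fun i => P i.succ)
      (fun i => hP i.succ) (fun i => hex i.succ)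
    obtain ⟨k₂, u₂, u₂', h₂⟩ := hex 0
    set l := IsFiltered.max k₁ k₂
    set L := IsFiltered.leftToMax k₁ k₂
    set R := IsFiltered.rightToMax k₁ k₂
    set c₁ := IsFiltered.coeqHom (u₁ ≫ L) (u₂ ≫ R)
    set c₂ := IsFiltered.coeqHom (u₁' ≫ L ≫ c₁) (u₂' ≫ R ≫ c₁)
    refine ⟨_, u₁ ≫ L ≫ c₁ ≫ c₂, u₁' ≫ L ≫ c₁ ≫ c₂, ?_⟩
    intro i
    refine Fin.cases ?_ (fun i' => ?_) i
    · have e1 : u₁ ≫ L ≫ c₁ ≫ c₂ = u₂ ≫ R ≫ c₁ ≫ c₂ := by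
        have := IsFiltered.coeq_condition (u₁ ≫ L) (u₂ ≫ R)
        simp only [Category.assoc] at this ⊢
        rw [reassoc_of% this]
      have e2 : u₁' ≫ L ≫ c₁ ≫ c₂ = u₂' ≫ R ≫ c₁ ≫ c₂ := by
        have := IsFiltered.coeq_condition (u₁' ≫ L ≫ c₁) (u₂' ≫ R ≫ c₁)
        simp only [Category.assoc] at this ⊢
        exact this
      rw [e1, e2]
      have := hP 0 (R ≫ c₁ ≫ c₂) u₂ u₂' h₂
      simpa using this
    · have := hP i'.succ (L ≫ c₁ ≫ c₂) u₁ u₁' (h₁ i')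
      simpa using this

/-- The constant cocone over a filtered category is a colimit. -/
noncomputable def constColimit {C : Type v} [Category.{u} C] (X : C) :
    IsColimit (Cocone.mk X (𝟙 ((Functor.const J).obj X)) :
      Cocone ((Functor.const J).obj X)) := by
  have key : ∀ (s : Cocone ((Functor.const J).obj X)) (j j' : J),
      s.ι.app j = s.ι.app j' := by
    intro s j j'
    have h : ∀ (a b : J) (f : a ⟶ b), s.ι.app b = s.ι.app a := by
      intro a b f
      have := s.ι.naturality f
      simpa using this
    rw [← h j (IsFiltered.max j j') (IsFiltered.leftToMax _ _),
      ← h j' (IsFiltered.max j j') (IsFiltered.rightToMax _ _)]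
  exact
    { desc := fun s => s.ι.app IsFiltered.nonempty.some
      fac := fun s j => by
        simpa using (key s j IsFiltered.nonempty.some).symm
      uniq := fun s m hm => by
        have := hm IsFiltered.nonempty.some
        simpa using this }


end FilteredAux

section BiCokAux
set_option linter.unusedVariables false
set_option linter.unusedSectionVars false

variable {C : Type v} [Category.{u} C] [Preadditive C]

section BP
variable [HasFiniteBiproducts C]
lemma isCompact_biproduct (hcolim : HasColimitsOfSize.{u, u} C) {n : ℕ} (s : Fin n → C)
    (hs : ∀ i, IsCompact.{u} (s i)) : IsCompact.{u} (⨁ s) := by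
  apply isCompact_of hcolim
  · intro J sc hJ F c hc f
    haveI := hJ
    have h1 : ∀ i, ∃ (j : J) (g : s i ⟶ F.obj j), g ≫ c.ι.app j = biproduct.ι s i ≫ f :=
      fun i => compact_fac (hs i) hc _
    choose j g hg using h1
    obtain ⟨k, t, -⟩ := exists_sup j
    refine ⟨k, biproduct.desc (fun i => g i ≫ F.map (t i)), ?_⟩
    ext i
    simp only [biproduct.ι_desc_assoc, Category.assoc, c.w (t i)]
    exact hg i
  · intro J sc hJ F c hc j j' g g' h
    haveI := hJ
    have key := equalize_family (J := J) (j := j) (j' := j') n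
      (fun i k u u' => biproduct.ι s i ≫ g ≫ F.map u = biproduct.ι s i ≫ g' ≫ F.map u')
      (by
        intro i k k' v u u' hPi
        simp only [F.map_comp]
        rw [reassoc_of% hPi])
      (by
        intro i
        have := compact_eq (hs i) hc (biproduct.ι s i ≫ g) (biproduct.ι s i ≫ g')
          (by simp only [Category.assoc, h])
        obtain ⟨k, u, u', hu⟩ := this
        exact ⟨k, u, u', by simpa using hu⟩)
    obtain ⟨k, u, u', hk⟩ := key
    refine ⟨k, u, u', ?_⟩
    ext i
    simpa using hk i


end BP

lemma epi_of_cofork {A B X : C} [HasZeroMorphisms C] {a : A ⟶ B} {p : B ⟶ X} {w : a ≫ p = 0}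
    (hco : IsColimit (CokernelCofork.ofπ p w)) : Epi p :=
  ⟨fun g h e => Cofork.IsColimit.hom_ext hco (by simpa using e)⟩

lemma isCompact_cokernel (hcolim : HasColimitsOfSize.{u, u} C) {A B X : C}
    (a : A ⟶ B) (p : B ⟶ X) (w : a ≫ p = 0)
    (hco : IsColimit (CokernelCofork.ofπ p w))
    (hA : IsCompact.{u} A) (hB : IsCompact.{u} B) : IsCompact.{u} X := by
  haveI hp : Epi p := epi_of_cofork hco
  apply isCompact_of hcolim
  · intro J sc hJ F c hc f
    haveI := hJ
    obtain ⟨j, g, hg⟩ := compact_fac hB hc (p ≫ f)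
    have h0 : (a ≫ g) ≫ c.ι.app j = (0 : A ⟶ F.obj j) ≫ c.ι.app j := by
      simp only [Category.assoc, hg, zero_comp]
      rw [reassoc_of% w, zero_comp]
    obtain ⟨k, u, u', hu⟩ := compact_eq hA hc (a ≫ g) 0 h0
    have hzero : a ≫ g ≫ F.map u = 0 := by
      rw [← Category.assoc, hu, zero_comp]
    obtain ⟨h, hh⟩ := CokernelCofork.IsColimit.desc' hco (g ≫ F.map u) hzero
    refine ⟨k, h, ?_⟩
    rw [← cancel_epi p]
    have hh' : p ≫ h = g ≫ F.map u := hh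
    rw [← Category.assoc, hh', Category.assoc, c.w u, hg]
  · intro J sc hJ F c hc j j' g g' h
    haveI := hJ
    obtain ⟨k, u, u', hu⟩ := compact_eq hB hc (p ≫ g) (p ≫ g')
      (by simp only [Category.assoc, h])
    refine ⟨k, u, u', ?_⟩
    rw [← cancel_epi p]
    simpa using hu


end BiCokAux

section FamAux
set_option linter.unusedVariables false
set_option linter.unusedSectionVars false

variable {C : Type v} [Category.{u} C] [Abelian C]

section Fam

variable {I : Type u} (obj : I → C) {Y : C} (val : ∀ x : I, obj x ⟶ Y)

/-- Finite biproduct over a finite set of indices. -/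
noncomputable abbrev famB (F : Finset I) : C := ⨁ (fun x : ↥F => obj x.1)

/-- Canonical map from the finite biproduct to `Y`. -/
noncomputable def famv (F : Finset I) : famB obj F ⟶ Y :=
  biproduct.desc (fun x => val x.1)

/-- Inclusion of biproducts along an inclusion of finite sets. -/
noncomputable def famInc {F F' : Finset I} (h : F ≤ F') : famB obj F ⟶ famB obj F' :=
  biproduct.desc (fun x => biproduct.ι (fun x : ↥F' => obj x.1) ⟨x.1, h x.2⟩)

@[simp] lemma famInc_v {F F' : Finset I} (h : F ≤ F') :
    famInc obj h ≫ famv obj val F' = famv obj val F := by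
  refine biproduct.hom_ext' _ _ fun x => ?_
  simp [famInc, famv]

@[simp] lemma ι_famv {F : Finset I} (x : I) (hx : x ∈ F) :
    biproduct.ι (fun x : ↥F => obj x.1) ⟨x, hx⟩ ≫ famv obj val F = val x := by
  simp [famv]

/-- The map between images induced by an inclusion of finite subsets. -/
noncomputable def imMap {F F' : Finset I} (h : F ≤ F') :
    image (famv obj val F) ⟶ image (famv obj val F') :=
  image.lift
    { I := image (famv obj val F')
      m := image.ι _
      e := famInc obj h ≫ factorThruImage _
      fac := by rw [Category.assoc, image.fac, famInc_v] }

@[simp] lemma imMap_ι {F F' : Finset I} (h : F ≤ F') :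
    imMap obj val h ≫ image.ι (famv obj val F') = image.ι (famv obj val F) :=
  image.lift_fac _

/-- The functor of images of the maps `famv` over finite subsets. -/
noncomputable abbrev imF : Finset I ⥤ C where
  obj F := image (famv obj val F)
  map {F F'} h := imMap obj val (leOfHom h)
  map_id F := by
    rw [← cancel_mono (image.ι (famv obj val F)), imMap_ι, Category.id_comp]
  map_comp {F F' F''} h h' := by
    rw [← cancel_mono (image.ι (famv obj val F'')), Category.assoc, imMap_ι, imMap_ι, imMap_ι]

@[simp] lemma imF_map_ι {F F' : Finset I} (h : F ⟶ F') :
    (imF obj val).map h ≫ image.ι (famv obj val F') = image.ι (famv obj val F) :=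
  imMap_ι obj val _

/-- The cocone over `imF` with point `Y` given by the image inclusions. -/
noncomputable abbrev imCocone : Cocone (imF obj val) where
  pt := Y
  ι := { app := fun F => image.ι (famv obj val F)
         naturality := fun F F' h => by simp }

end Fam

lemma isCompact_famB (hcolim : HasColimitsOfSize.{u, u} C) {I : Type u} (obj : I → C)
    (h : ∀ x, IsCompact.{u} (obj x)) (F : Finset I) : IsCompact.{u} (famB obj F) :=
  isCompact_of_iso
    (biproduct.whiskerEquiv (f := fun i : Fin F.card => obj (F.equivFin.symm i).1)
      (g := fun x : ↥F => obj x.1) F.equivFin.symm (fun i => Iso.refl _))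
    (isCompact_biproduct hcolim _ (fun i => h _))

lemma stepA {κ : Type u} (ι : κ → C) (hcpt : ∀ p, IsCompact.{u} (ι p))
    (hcolim : HasColimitsOfSize.{u, u} C) (hAB5 : AB5P.{u} C)
    (X : C)
    (hsep : ∀ ⦃Z : C⦄ (h : X ⟶ Z), (∀ (p : κ) (f : ι p ⟶ X), f ≫ h = 0) → h = 0)
    (hX : IsCompact.{u} X) :
    ∃ (n : ℕ) (k : Fin n → κ) (g : (⨁ fun i => ι (k i)) ⟶ X), Epi g := by
  haveI := hcolim
  let I' := Σ p : κ, (ι p ⟶ X)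
  let obj : I' → C := fun x => ι x.1
  let val : ∀ x : I', obj x ⟶ X := fun x => x.2
  let D := imF obj val
  let cc := imCocone obj val
  let τ : D ⟶ (Functor.const (Finset I')).obj X := (imCocone obj val).ι
  let m0 : colimit D ⟶ X := colimit.desc D cc
  have hι_m0 : ∀ T, colimit.ι D T ≫ m0 = image.ι (famv obj val T) :=
    fun T => colimit.ι_desc cc T
  have hmono : Mono m0 := by
    obtain ⟨hFin⟩ := hAB5 (Finset I') inferInstance inferInstance inferInstance
    haveI := hFin
    haveI : ∀ T, Mono (τ.app T) := fun T => by
      show Mono (image.ι (famv obj val T)); infer_instance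
    haveI : Mono τ := NatTrans.mono_of_mono_app _
    haveI : Mono (colim.map τ) := inferInstance
    have hm0 : m0 = colim.map τ ≫
        ((colimit.isColimit ((Functor.const (Finset I')).obj X)).coconePointUniqueUpToIso
          (constColimit X)).hom := by
      apply colimit.hom_ext
      intro T
      have h2 : colimit.ι ((Functor.const (Finset I')).obj X) T ≫
          ((colimit.isColimit ((Functor.const (Finset I')).obj X)).coconePointUniqueUpToIso
            (constColimit X)).hom = 𝟙 X :=
        IsColimit.comp_coconePointUniqueUpToIso_hom _ _ T
      rw [colimit.ι_desc, ← Category.assoc, colimit.ι_map, Category.assoc, h2]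
      simp
      rfl
    rw [hm0]
    exact mono_comp _ _
  have hepi : Epi m0 := by
    apply CategoryTheory.Abelian.epi_of_cokernel_π_eq_zero
    apply hsep
    intro p f
    have hf : (biproduct.ι (fun x : ↥({⟨p, f⟩} : Finset I') => obj x.1)
        ⟨⟨p, f⟩, Finset.mem_singleton_self _⟩) ≫ famv obj val {⟨p, f⟩} = f :=
      ι_famv obj val _ _
    rw [← hf, ← image.fac (famv obj val {⟨p, f⟩}), ← hι_m0]
    simp only [Category.assoc, cokernel.condition, comp_zero]
  haveI := hmono
  haveI := hepi
  haveI : IsIso m0 := isIso_of_mono_of_epi _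
  obtain ⟨T, g0, hg0⟩ := compact_fac hX (colimit.isColimit D) (inv m0)
  have hsect : g0 ≫ image.ι (famv obj val T) = 𝟙 X := by
    have hg0' : g0 ≫ colimit.ι D T = inv m0 := hg0
    rw [← hι_m0 T, ← Category.assoc, hg0', IsIso.inv_hom_id]
  haveI : IsSplitEpi (image.ι (famv obj val T)) := IsSplitEpi.mk' ⟨g0, hsect⟩
  haveI : IsIso (image.ι (famv obj val T)) := isIso_of_mono_of_epi _
  have hepiT : Epi (famv obj val T) := by
    rw [← image.fac (famv obj val T)]
    exact epi_comp _ _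
  let e : Fin T.card ≃ ↥T := T.equivFin.symm
  refine ⟨T.card, fun i => (e i).1.1,
    (biproduct.whiskerEquiv (f := fun i : Fin T.card => ι ((e i).1.1))
      (g := fun x : ↥T => obj x.1) e (fun i => Iso.refl _)).hom ≫ famv obj val T, ?_⟩
  exact epi_comp _ _

section CokFam

variable {I : Type u} (obj : I → C) {Y : C} (val : ∀ x : I, obj x ⟶ Y)

/-- The functor of cokernels of the maps `famv` over finite subsets. -/
noncomputable abbrev cokD : Finset I ⥤ C where
  obj F := cokernel (famv obj val F)
  map {F F'} h := cokernel.desc _ (cokernel.π (famv obj val F'))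
    (by rw [← famInc_v obj val (leOfHom h), Category.assoc, cokernel.condition, comp_zero])
  map_id F := by
    rw [← cancel_epi (cokernel.π (famv obj val F))]
    simp
  map_comp {F F' F''} h h' := by
    rw [← cancel_epi (cokernel.π (famv obj val F))]
    simp

@[simp] lemma π_cokD_map {F F' : Finset I} (h : F ⟶ F') :
    cokernel.π (famv obj val F) ≫ (cokD obj val).map h = cokernel.π (famv obj val F') :=
  cokernel.π_desc _ _ _

variable {X : C} (q : Y ⟶ X) (hq : ∀ x : I, val x ≫ q = 0)

include hq in
lemma famv_comp_zero (F : Finset I) : famv obj val F ≫ q = 0 := by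
  refine biproduct.hom_ext' _ _ fun x => ?_
  simp [famv, hq x.1]

/-- The cocone over `cokD` with point `X`. -/
noncomputable abbrev cokCocone : Cocone (cokD obj val) where
  pt := X
  ι :=
    { app := fun F => cokernel.desc _ q (famv_comp_zero obj val q hq F)
      naturality := fun F F' h => by
        rw [← cancel_epi (cokernel.π (famv obj val F))]
        simp [cokD] }

end CokFam

lemma stepB {κ : Type u} (ι : κ → C) (hcpt : ∀ p, IsCompact.{u} (ι p))
    (hcolim : HasColimitsOfSize.{u, u} C) (B X : C) (hB : IsCompact.{u} B)
    (q : B ⟶ X) (hq : Epi q)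
    (hsep : ∀ ⦃Z : C⦄ (h : kernel q ⟶ Z),
      (∀ (p : κ) (f : ι p ⟶ kernel q), f ≫ h = 0) → h = 0)
    (hX : IsCompact.{u} X) :
    ∃ (n : ℕ) (k : Fin n → κ) (a : (⨁ fun i => ι (k i)) ⟶ B) (w : a ≫ q = 0),
      Nonempty (IsColimit (CokernelCofork.ofπ q w)) := by
  haveI := hcolim
  haveI := hq
  let I' := Σ p : κ, (ι p ⟶ kernel q)
  let obj : I' → C := fun x => ι x.1
  let val : ∀ x : I', obj x ⟶ B := fun x => x.2 ≫ kernel.ι q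
  have hq0 : ∀ x : I', val x ≫ q = 0 := fun x => by
    show (x.2 ≫ kernel.ι q) ≫ q = 0
    rw [Category.assoc, kernel.condition, comp_zero]
  let D := cokD obj val
  let cc := cokCocone obj val q hq0
  let m' : colimit D ⟶ X := colimit.desc D cc
  have hπc : ∀ F, cokernel.π (famv obj val F) ≫ cc.ι.app F = q :=
    fun F => cokernel.π_desc _ _ _
  let ψ : B ⟶ colimit D := cokernel.π (famv obj val ∅) ≫ colimit.ι D ∅
  have hψF : ∀ F : Finset I',
      ψ = cokernel.π (famv obj val F) ≫ colimit.ι D F := by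
    intro F
    have hwD := colimit.w D (homOfLE (Finset.empty_subset F) : (∅ : Finset I') ⟶ F)
    show cokernel.π (famv obj val ∅) ≫ colimit.ι D ∅ = _
    rw [← hwD, ← Category.assoc]
    congr 1
    exact π_cokD_map obj val _
  have hkψ : kernel.ι q ≫ ψ = 0 := by
    apply hsep
    intro p f
    set x : I' := ⟨p, f⟩ with hx
    have hmem : x ∈ ({x} : Finset I') := Finset.mem_singleton_self _
    have hfk : f ≫ kernel.ι q =
        biproduct.ι (fun y : ↥({x} : Finset I') => obj y.1) ⟨x, hmem⟩ ≫
          famv obj val {x} := (ι_famv obj val x hmem).symm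
    have h0 : (f ≫ kernel.ι q) ≫ cokernel.π (famv obj val {x}) = 0 := by
      rw [hfk, Category.assoc, cokernel.condition, comp_zero]
    rw [hψF {x},
      show f ≫ kernel.ι q ≫ cokernel.π (famv obj val {x}) ≫ colimit.ι D {x} =
        ((f ≫ kernel.ι q) ≫ cokernel.π (famv obj val {x})) ≫ colimit.ι D {x} by
          simp only [Category.assoc],
      h0, zero_comp]
  have hqcoker := CategoryTheory.Abelian.epiIsCokernelOfKernel _ (kernelIsKernel q)
  obtain ⟨w0, hw0⟩ := CokernelCofork.IsColimit.desc' hqcoker ψ (by simpa using hkψ)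
  have hqw : q ≫ w0 = ψ := hw0
  have hwm : w0 ≫ m' = 𝟙 X := by
    rw [← cancel_epi q, ← Category.assoc, hqw, Category.comp_id]
    show ψ ≫ m' = q
    rw [Category.assoc, colimit.ι_desc, hπc]
  have hcw : ∀ F, cc.ι.app F ≫ w0 = colimit.ι D F := by
    intro F
    rw [← cancel_epi (cokernel.π (famv obj val F)), ← Category.assoc, hπc, hqw, hψF F]
  have hmw : m' ≫ w0 = 𝟙 (colimit D) := by
    apply colimit.hom_ext
    intro F
    rw [Category.comp_id, ← Category.assoc, colimit.ι_desc, hcw]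
  obtain ⟨F₀, g, hg⟩ := compact_fac hX (colimit.isColimit D) w0
  have hg' : g ≫ colimit.ι D F₀ = w0 := hg
  have hgc : g ≫ cc.ι.app F₀ = 𝟙 X := by
    have hh : colimit.ι D F₀ ≫ m' = cc.ι.app F₀ := colimit.ι_desc cc F₀
    rw [← hh, ← Category.assoc, hg', hwm]
  have hXF : IsCompact.{u} (D.obj F₀) := by
    refine isCompact_cokernel hcolim (famv obj val F₀) (cokernel.π _)
      (cokernel.condition _) (cokernelIsCokernel _) ?_ hB
    exact isCompact_famB hcolim obj (fun x => hcpt x.1) F₀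
  let e0 : D.obj F₀ ⟶ D.obj F₀ := cc.ι.app F₀ ≫ g
  have he : e0 ≫ (colimit.cocone D).ι.app F₀ = 𝟙 (D.obj F₀) ≫ (colimit.cocone D).ι.app F₀ := by
    show e0 ≫ colimit.ι D F₀ = 𝟙 (D.obj F₀) ≫ colimit.ι D F₀
    rw [Category.id_comp, Category.assoc, hg', hcw]
  obtain ⟨G, u, u', hu⟩ := compact_eq hXF (colimit.isColimit D) e0 (𝟙 _) he
  have huu : u = u' := Subsingleton.elim u u'
  rw [← huu, Category.id_comp] at hu
  haveI : Epi (D.map u) := by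
    have h3 : cokernel.π (famv obj val F₀) ≫ (cokD obj val).map u =
        cokernel.π (famv obj val G) := π_cokD_map obj val u
    exact epi_of_epi_fac h3
  let sec : X ⟶ D.obj G := g ≫ D.map u
  have h1 : sec ≫ cc.ι.app G = 𝟙 X := by
    have hnat : D.map u ≫ cc.ι.app G = cc.ι.app F₀ := cc.w u
    show (g ≫ D.map u) ≫ cc.ι.app G = 𝟙 X
    rw [Category.assoc, hnat, hgc]
  have h2 : cc.ι.app G ≫ sec = 𝟙 (D.obj G) := by
    rw [← cancel_epi (D.map u), ← Category.assoc, cc.w u, Category.comp_id]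
    show cc.ι.app F₀ ≫ g ≫ D.map u = D.map u
    rw [← Category.assoc]
    exact hu
  have hwG : famv obj val G ≫ q = 0 := famv_comp_zero obj val q hq0 G
  let e : Fin G.card ≃ ↥G := G.equivFin.symm
  let Φ := biproduct.whiskerEquiv (f := fun i : Fin G.card => ι ((e i).1.1))
    (g := fun x : ↥G => obj x.1) e (fun i => Iso.refl _)
  refine ⟨G.card, fun i => (e i).1.1, Φ.hom ≫ famv obj val G,
    by rw [Category.assoc, hwG, comp_zero], ⟨?_⟩⟩
  refine CokernelCofork.IsColimit.ofπ' q _ (fun {Z} k hk => ?_)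
  have hk' : famv obj val G ≫ k = 0 := by
    have := hk
    rw [Category.assoc] at this
    exact (cancel_epi Φ.hom).mp (by simpa using this)
  refine ⟨sec ≫ cokernel.desc (famv obj val G) k hk', ?_⟩
  rw [← hπc G]
  rw [Category.assoc, ← Category.assoc (cc.ι.app G), h2, Category.id_comp, cokernel.π_desc]

end FamAux

end BreitsprecherAux

/-- (Breitsprecher) Let `C` be a locally finitely presented Grothendieck category and `S` a
class of compact generators. Then `X` is compact if and only if it has a presentation
`⊕ᵢ Sᵢ ⟶ ⊕ⱼ S'ⱼ ⟶ X ⟶ 0` by finite direct sums of objects of `S`. -/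
theorem statement_14 {C : Type v} [Category.{u} C] [Abelian C]
    (hcolim : HasColimitsOfSize.{u, u} C) (hgen : ∃ G : C, IsSeparator G)
    (hAB5 : AB5P.{u} C) (hlfp : IsLocallyFinitelyPresented.{u} C)
    (S : Set C) (hScpt : ∀ X ∈ S, IsCompact.{u} X) (hSgen : ObjectProperty.IsSeparating (fun G => G ∈ S)) (X : C) :
    IsCompact.{u} X ↔
      ∃ (n m : ℕ) (s : Fin n → C) (s' : Fin m → C),
        (∀ i, s i ∈ S) ∧ (∀ j, s' j ∈ S) ∧
        ∃ (a : (⨁ s) ⟶ (⨁ s')) (p : (⨁ s') ⟶ X) (w : a ≫ p = 0),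
          Nonempty (IsColimit (CokernelCofork.ofπ p w)) := by
  constructor
  · intro hX
    obtain ⟨-, hsmall, -⟩ := hlfp
    haveI := hsmall
    let E := equivSmallModel.{u} (ObjectProperty.FullSubcategory (fun Y : C => IsCompact.{u} Y))
    let κ := {p : SmallModel (ObjectProperty.FullSubcategory (fun Y : C => IsCompact.{u} Y)) //
      ∃ s ∈ S, Nonempty ((E.inverse.obj p).obj ≅ s)}
    let ι : κ → C := fun p => (E.inverse.obj p.1).obj
    have hcpt : ∀ p : κ, IsCompact.{u} (ι p) := fun p => (E.inverse.obj p.1).property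
    have hiso : ∀ p : κ, ∃ s ∈ S, Nonempty (ι p ≅ s) := fun p => p.2
    have hsur : ∀ s, s ∈ S → ∃ p : κ, Nonempty (ι p ≅ s) := by
      intro s hs
      have hc := hScpt s hs
      let o : ObjectProperty.FullSubcategory (fun Y : C => IsCompact.{u} Y) := ⟨s, hc⟩
      have e1 : (E.inverse.obj (E.functor.obj o)).obj ≅ s :=
        (ObjectProperty.ι _).mapIso (E.unitIso.symm.app o)
      exact ⟨⟨E.functor.obj o, s, hs, ⟨e1⟩⟩, ⟨e1⟩⟩
    have hsep : ∀ ⦃Y Z : C⦄ (h : Y ⟶ Z), (∀ (p : κ) (f : ι p ⟶ Y), f ≫ h = 0) → h = 0 := by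
      intro Y Z h hall
      refine hSgen h 0 ?_
      intro G hG t
      obtain ⟨p, ⟨ep⟩⟩ := hsur G hG
      have h1 := hall p (ep.hom ≫ t)
      rw [Category.assoc] at h1
      rw [comp_zero, ← cancel_epi ep.hom, comp_zero]
      exact h1
    obtain ⟨m, k', g, hg⟩ := stepA ι hcpt hcolim hAB5 X (fun Z h hh => hsep h hh) hX
    haveI := hg
    have hBcpt : IsCompact.{u} (⨁ fun i => ι (k' i)) :=
      isCompact_biproduct hcolim _ (fun i => hcpt _)
    obtain ⟨n, k, a, w, ⟨hco⟩⟩ :=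
      stepB ι hcpt hcolim _ X hBcpt g hg (fun Z h hh => hsep h hh) hX
    choose sfun hsfunS hsfuniso using hiso
    have ε : ∀ p : κ, ι p ≅ sfun p := fun p => (hsfuniso p).some
    let Φ := biproduct.whiskerEquiv (f := fun i => sfun (k i)) (g := fun i => ι (k i))
      (Equiv.refl _) (fun i => ε (k i))
    let Ψ := biproduct.whiskerEquiv (f := fun j => sfun (k' j)) (g := fun j => ι (k' j))
      (Equiv.refl _) (fun j => ε (k' j))
    haveI : Epi (Ψ.hom ≫ g) := epi_comp _ _
    refine ⟨n, m, fun i => sfun (k i), fun j => sfun (k' j), fun i => hsfunS _,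
      fun j => hsfunS _, Φ.hom ≫ a ≫ Ψ.inv, Ψ.hom ≫ g, ?_, ⟨?_⟩⟩
    · simp only [Category.assoc, Iso.inv_hom_id_assoc, w, comp_zero]
    · refine CokernelCofork.IsColimit.ofπ' _ _ (fun {Z} kk hk => ?_)
      have hk' : a ≫ Ψ.inv ≫ kk = 0 := by
        have h2 : Φ.hom ≫ a ≫ Ψ.inv ≫ kk = 0 := by
          simpa only [Category.assoc] using hk
        rw [← cancel_epi Φ.hom, h2, comp_zero]
      obtain ⟨l, hl⟩ := CokernelCofork.IsColimit.desc' hco (Ψ.inv ≫ kk) hk'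
      have hl' : g ≫ l = Ψ.inv ≫ kk := hl
      exact ⟨l, by rw [Category.assoc, hl', Iso.hom_inv_id_assoc]⟩
  · rintro ⟨n, m, s, s', hsS, hs'S, a, p, w, ⟨hco⟩⟩
    exact isCompact_cokernel hcolim a p w hco
      (isCompact_biproduct hcolim s (fun i => hScpt _ (hsS i)))
      (isCompact_biproduct hcolim s' (fun i => hScpt _ (hs'S i)))

end Env
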